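/- Let φ be a flow on X, F : X → ℝ a positive continuous function, and μ a φ-invariant Borel probability measure. Define the measure μ^F on X by μ^F(G) = (∫ G·F dμ)/(∫ F dμ) for continuous G. Then μ^F is a Borel probability measure invariant under the reparametrized flow φ^F. -/

import Mathlib

open MeasureTheory Set
open scoped NNReal ENNReal

/-- If `μ` is a `φ`-invariant Borel probability measure and `F > 0` is continuous, then
the measure `μ^F` with `μ^F(G) = (∫ G·F dμ)/(∫ F dμ)` is a Borel probability measure
invariant under the reparametrized flow `φ^F`. -/
theorem reparametrized_measure_invariant
    {X : Type*} [MetricSpace X] [CompactSpace X] [MeasurableSpace X] [BorelSpace X]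
    (φ : ℝ → X → X)
    (hφc : Continuous fun p : ℝ × X => φ p.1 p.2)
    (hφ0 : ∀ x, φ 0 x = x)
    (hφadd : ∀ t s x, φ (t + s) x = φ t (φ s x))
    (F : X → ℝ) (hF : Continuous F) (hFpos : ∀ x, 0 < F x)
    (κ : X → ℝ → ℝ)
    (hκ : ∀ x t, κ x t = ∫ s in (0:ℝ)..t, F (φ s x))
    (α : X → ℝ → ℝ)
    (hα₁ : ∀ x t, α x (κ x t) = t)
    (hα₂ : ∀ x t, κ x (α x t) = t)
    (φF : ℝ → X → X)
    (hφF : ∀ t x, φF t x = φ (α x t) x)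
    (μ : Measure X) [IsProbabilityMeasure μ]
    (hinv : ∀ t : ℝ, Measure.map (φ t) μ = μ)
    (μF : Measure X)
    (hμF : μF = (ENNReal.ofReal (∫ x, F x ∂μ))⁻¹ •
        μ.withDensity (fun x => ENNReal.ofReal (F x))) :
    IsProbabilityMeasure μF ∧ ∀ t : ℝ, Measure.map (φF t) μF = μF := by
  classical
  -- continuity of F along the flow
  have hFφ : ∀ x : X, Continuous fun s : ℝ => F (φ s x) := fun x =>
    hF.comp (hφc.comp (continuous_id.prodMk continuous_const))
  have hFφint : ∀ (x : X) (a b : ℝ),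
      IntervalIntegrable (fun s => F (φ s x)) MeasureSpace.volume a b :=
    fun x a b => (hFφ x).intervalIntegrable a b
  -- joint continuity of κ
  have hκc : Continuous fun p : X × ℝ => κ p.1 p.2 := by
    have : (fun p : X × ℝ => κ p.1 p.2)
        = fun p : X × ℝ => ∫ s in (0:ℝ)..p.2, F (φ s p.1) := by
      funext p; exact hκ p.1 p.2
    rw [this]
    exact intervalIntegral.continuous_parametric_primitive_of_continuous
      (f := fun (x : X) (s : ℝ) => F (φ s x))
      (hF.comp (hφc.comp (continuous_snd.prodMk continuous_fst)))
  have hκx : ∀ s : ℝ, Continuous fun x : X => κ x s := fun s =>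
    hκc.comp (continuous_id.prodMk continuous_const)
  have hκ0 : ∀ x, κ x 0 = 0 := fun x => by
    rw [hκ]; exact intervalIntegral.integral_same
  -- κ x b = κ x a + ∫_a^b
  have hκdiff : ∀ x a b, κ x b = κ x a + ∫ s in a..b, F (φ s x) := by
    intro x a b
    rw [hκ, hκ]
    rw [intervalIntegral.integral_add_adjacent_intervals (hFφint x 0 a) (hFφint x a b)]
  have hκmono : ∀ x, StrictMono (κ x) := by
    intro x a b hab
    have := intervalIntegral.intervalIntegral_pos_of_pos (f := fun s => F (φ s x)) (hFφint x a b)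
      (fun s => hFpos _) hab
    rw [hκdiff x a b]; linarith
  have hα0 : ∀ x, α x 0 = 0 := fun x => by
    conv_lhs => rw [← hκ0 x, hα₁ x 0]
  have hαmono : ∀ x, StrictMono (α x) := by
    intro x a b hab
    by_contra h
    have h2 : α x b ≤ α x a := le_of_not_gt h
    have := (hκmono x).le_iff_le.mpr h2
    rw [hα₂, hα₂] at this
    exact absurd this (not_le.mpr hab)
  have hαsurj : ∀ x, Function.Surjective (α x) := fun x t => ⟨κ x t, hα₁ x t⟩
  have hαcont : ∀ x, Continuous (α x) := by
    intro x
    exact ((StrictMono.orderIsoOfSurjective (α x) (hαmono x)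
      (hαsurj x)).toHomeomorph).continuous
  -- Galois-type inequalities
  have hαle : ∀ x s t, α x t ≤ s ↔ t ≤ κ x s := by
    intro x s t
    constructor
    · intro h
      have := (hκmono x).le_iff_le.mpr h
      rwa [hα₂] at this
    · intro h
      have := (hαmono x).le_iff_le.mpr h
      rwa [hα₁] at this
  have hleα : ∀ x s t, s ≤ α x t ↔ κ x s ≤ t := by
    intro x s t
    constructor
    · intro h
      have := (hκmono x).le_iff_le.mpr h
      rwa [hα₂] at this
    · intro h
      have := (hαmono x).le_iff_le.mpr h
      rwa [hα₁] at this
  -- measurability of α jointly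
  have hαmeas : Measurable fun p : ℝ × X => α p.2 p.1 := by
    apply measurable_of_Iic
    intro s
    have : (fun p : ℝ × X => α p.2 p.1) ⁻¹' Iic s = {p : ℝ × X | p.1 ≤ κ p.2 s} := by
      ext p
      simp only [mem_preimage, mem_Iic, mem_setOf_eq, hαle]
    rw [this]
    exact (isClosed_le continuous_fst ((hκx s).comp continuous_snd)).measurableSet
  have hφFmeas' : Measurable fun p : ℝ × X => φF p.1 p.2 := by
    have : (fun p : ℝ × X => φF p.1 p.2) = fun p : ℝ × X => φ (α p.2 p.1) p.2 := by
      funext p; exact hφF p.1 p.2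
    rw [this]
    exact hφc.measurable.comp (hαmeas.prodMk measurable_snd)
  have hφFmeas : ∀ t, Measurable (φF t) :=
    fun t => hφFmeas'.comp (measurable_const.prodMk measurable_id)
  -- cocycles
  have hκadd : ∀ x a b, κ x (a + b) = κ x a + κ (φ a x) b := by
    intro x a b
    have h1 : ∫ s in (0:ℝ)..b, F (φ s (φ a x)) = ∫ s in (0:ℝ)..b, F (φ (s + a) x) := by
      apply intervalIntegral.integral_congr
      intro s _
      simp only [← hφadd]
    rw [hκdiff x a (a + b), hκ (φ a x) b, h1,
      intervalIntegral.integral_comp_add_right (fun s => F (φ s x)) a, zero_add, add_comm b a]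
  have hκneg : ∀ (x : X) (s : ℝ), κ (φ (-s) x) s = -κ x (-s) := by
    intro x s
    have h1 := hκadd x (-s) s
    rw [neg_add_cancel, hκ0] at h1
    linarith
  have hαadd : ∀ x a b, α x (a + b) = α x a + α (φ (α x a) x) b := by
    intro x a b
    have : κ x (α x a + α (φ (α x a) x) b) = a + b := by
      rw [hκadd, hα₂, hα₂]
    rw [← this, hα₁]
  have hφFadd : ∀ a b x, φF a (φF b x) = φF (a + b) x := by
    intro a b x
    rw [hφF, hφF, hφF, ← hφadd]
    have h2 : α (φ (α x b) x) a + α x b = α x (a + b) := by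
      rw [add_comm a b, hαadd x b a]; ring
    rw [h2]
  have hφF0 : ∀ x, φF 0 x = x := fun x => by rw [hφF, hα0, hφ0]
  have hφcont : ∀ t : ℝ, Continuous (φ t) := fun t =>
    hφc.comp (continuous_const.prodMk continuous_id)
  -- X is nonempty
  have hXne : Nonempty X := by
    by_contra h
    rw [not_nonempty_iff] at h
    haveI := h
    have h1 : μ (univ : Set X) = 1 := measure_univ
    have h2 : (univ : Set X) = ∅ := by
      ext x
      exact absurd trivial (h.elim x)
    rw [h2, measure_empty] at h1
    exact zero_ne_one h1
  -- bounds on F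
  obtain ⟨x₀, -, hx₀⟩ := isCompact_univ.exists_isMinOn univ_nonempty hF.continuousOn
  set ε : ℝ := F x₀ with hεdef
  have hεpos : 0 < ε := hFpos x₀
  have hεle : ∀ x, ε ≤ F x := fun x => hx₀ (mem_univ x)
  obtain ⟨x₁, -, hx₁⟩ := isCompact_univ.exists_isMaxOn univ_nonempty hF.continuousOn
  set MF : ℝ := F x₁ with hMFdef
  have hMFle : ∀ x, F x ≤ MF := fun x => hx₁ (mem_univ x)
  -- F is integrable and has positive integral
  have hμint : ∀ (h : X → ℝ) (c : ℝ), AEStronglyMeasurable h μ → (∀ x, |h x| ≤ c) →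
      Integrable h μ := by
    intro h c hm hb
    exact (integrable_const c).mono' hm (ae_of_all _ (fun x => hb x))
  have hMF0 : 0 < MF := lt_of_lt_of_le hεpos (hεle x₁)
  have hFint : Integrable F μ := hμint F MF hF.aestronglyMeasurable
    (fun x => by rw [abs_of_pos (hFpos x)]; exact hMFle x)
  have hCpos : 0 < ∫ x, F x ∂μ := by
    have h1 : ∫ x, (ε : ℝ) ∂μ ≤ ∫ x, F x ∂μ :=
      integral_mono (integrable_const ε) hFint hεle
    rw [integral_const] at h1
    simp only [probReal_univ, one_smul] at h1
    linarith
  -- lower bound for κ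
  have hκlb : ∀ (x : X) (s : ℝ), 0 ≤ s → ε * s ≤ κ x s := by
    intro x s hs
    have h1 : ∫ r in (0:ℝ)..s, (ε : ℝ) ≤ ∫ r in (0:ℝ)..s, F (φ r x) :=
      intervalIntegral.integral_mono_on hs (intervalIntegrable_const) (hFφint x 0 s)
        (fun r _ => hεle _)
    rw [intervalIntegral.integral_const] at h1
    rw [hκ]
    simp only [sub_zero, smul_eq_mul] at h1
    linarith [h1]
  -- integrability of bounded compactly supported functions on ℝ × X
  have hprodint : ∀ (f : ℝ × X → ℝ) (c B' : ℝ), AEStronglyMeasurable f (volume.prod μ) →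
      (∀ q, |f q| ≤ c) → (∀ q, f q ≠ 0 → q.1 ∈ Icc 0 B') →
      Integrable f (MeasureSpace.volume.prod μ) := by
    intro f c B' hm hb hsupp
    refine Integrable.mono'
      (g := (Icc 0 B' ×ˢ (univ : Set X)).indicator fun _ => c) ?_ hm (ae_of_all _ ?_)
    · rw [integrable_indicator_iff (measurableSet_Icc.prod MeasurableSet.univ)]
      refine integrableOn_const (ne_of_lt ?_)
      rw [Measure.prod_prod, measure_univ, mul_one]
      exact measure_Icc_lt_top
    · intro q
      by_cases hq : f q = 0
      · rw [hq]
        simp only [norm_zero]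
        exact indicator_nonneg (fun _ _ => (abs_nonneg (f q)).trans (hb q)) _
      · have hmem : q ∈ Icc 0 B' ×ˢ (univ : Set X) := ⟨hsupp q hq, mem_univ _⟩
        rw [indicator_of_mem hmem]
        exact hb q
  -- key identity
  have key : ∀ g : X → ℝ, Continuous g → ∀ t : ℝ, 0 ≤ t →
      ∫ x, F x * g (φF t x) ∂μ = ∫ x, F x * g x ∂μ := by
    intro g hg
    obtain ⟨xg, -, hxg⟩ := isCompact_univ.exists_isMaxOn univ_nonempty hg.abs.continuousOn
    set Mg : ℝ := |g xg| with hMgdef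
    have hMgle : ∀ x, |g x| ≤ Mg := fun x => hxg (mem_univ x)
    set T : ℝ → ℝ := fun u => ∫ x, F x * g (φF u x) ∂μ with hTdef
    set C : ℝ := ∫ x, F x * g x ∂μ with hCdef
    have hmeasu : ∀ u : ℝ, AEStronglyMeasurable (fun x => F x * g (φF u x)) μ := fun u =>
      (hF.measurable.mul (hg.measurable.comp (hφFmeas u))).aestronglyMeasurable
    have hTcont : Continuous T := by
      apply continuous_of_dominated hmeasu (bound := fun _ => MF * Mg)
      · intro u
        filter_upwards with x
        rw [Real.norm_eq_abs, abs_mul, abs_of_pos (hFpos x)]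
        exact mul_le_mul (hMFle x) (hMgle _) (abs_nonneg _)
          (le_trans hεpos.le (hεle x₁))
      · exact integrable_const _
      · filter_upwards with x
        simp only [hφF]
        exact continuous_const.mul
          (hg.comp (hφc.comp ((hαcont x).prodMk continuous_const)))
    have hMg0 : 0 ≤ Mg := (abs_nonneg (g xg)).trans (le_of_eq rfl)
    have havg : ∀ t : ℝ, 0 ≤ t → ∫ u in (0:ℝ)..t, T u = t * C := by
      intro t ht
      set B : ℝ := t / ε with hBdef
      set A1 : Set (ℝ × X) := Ioc 0 t ×ˢ (univ : Set X) with hA1def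
      set f1 : ℝ × X → ℝ := A1.indicator (fun q => F q.2 * g (φF q.1 q.2)) with hf1def
      set A2 : Set (ℝ × X) := {q : ℝ × X | 0 < q.1 ∧ κ q.2 q.1 ≤ t} with hA2def
      set f2 : ℝ × X → ℝ :=
        A2.indicator (fun q => F q.2 * (F (φ q.1 q.2) * g (φ q.1 q.2))) with hf2def
      set A3 : Set (ℝ × X) := {q : ℝ × X | 0 < q.1 ∧ -κ q.2 (-q.1) ≤ t} with hA3def
      set f3 : ℝ × X → ℝ :=
        A3.indicator (fun q => F (φ (-q.1) q.2) * (F q.2 * g q.2)) with hf3def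
      have hA1m : MeasurableSet A1 := measurableSet_Ioc.prod MeasurableSet.univ
      have hκq : Continuous fun q : ℝ × X => κ q.2 q.1 :=
        hκc.comp (continuous_snd.prodMk continuous_fst)
      have hκq' : Continuous fun q : ℝ × X => κ q.2 (-q.1) :=
        hκc.comp (continuous_snd.prodMk continuous_fst.neg)
      have hA2m : MeasurableSet A2 :=
        ((isOpen_lt continuous_const continuous_fst).measurableSet).inter
          ((isClosed_le hκq continuous_const).measurableSet)
      have hA3m : MeasurableSet A3 :=
        ((isOpen_lt continuous_const continuous_fst).measurableSet).inter
          ((isClosed_le hκq'.neg continuous_const).measurableSet)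
      have hf1m : AEStronglyMeasurable f1 (MeasureSpace.volume.prod μ) :=
        (((hF.measurable.comp measurable_snd).mul
          (hg.measurable.comp hφFmeas')).indicator
            hA1m).stronglyMeasurable.aestronglyMeasurable
      have hf2m : AEStronglyMeasurable f2 (MeasureSpace.volume.prod μ) :=
        (((hF.comp continuous_snd).mul
          ((hF.comp hφc).mul (hg.comp hφc))).measurable.indicator
            hA2m).stronglyMeasurable.aestronglyMeasurable
      have hφneg : Continuous fun q : ℝ × X => φ (-q.1) q.2 :=
        hφc.comp (continuous_fst.neg.prodMk continuous_snd)
      have hf3m : AEStronglyMeasurable f3 (MeasureSpace.volume.prod μ) :=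
        (((hF.comp hφneg).mul
          ((hF.comp continuous_snd).mul (hg.comp continuous_snd))).measurable.indicator
            hA3m).stronglyMeasurable.aestronglyMeasurable
      -- bounds
      have hb1 : ∀ q, |f1 q| ≤ MF * Mg := by
        intro q
        by_cases hq : q ∈ A1
        · rw [hf1def, indicator_of_mem hq, abs_mul, abs_of_pos (hFpos _)]
          exact mul_le_mul (hMFle _) (hMgle _) (abs_nonneg _) hMF0.le
        · rw [hf1def, indicator_of_notMem hq, abs_zero]
          exact mul_nonneg hMF0.le hMg0
      have hbnd : ∀ (s : ℝ) (x y : X), |F x * (F y * g y)| ≤ MF * (MF * Mg) := by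
        intro s x y
        rw [abs_mul, abs_mul, abs_of_pos (hFpos x), abs_of_pos (hFpos y)]
        exact mul_le_mul (hMFle x)
          (mul_le_mul (hMFle y) (hMgle y) (abs_nonneg _) hMF0.le)
          (mul_nonneg (hFpos y).le (abs_nonneg _)) hMF0.le
      have hb2 : ∀ q, |f2 q| ≤ MF * (MF * Mg) := by
        intro q
        by_cases hq : q ∈ A2
        · rw [hf2def, indicator_of_mem hq]
          exact hbnd q.1 q.2 (φ q.1 q.2)
        · rw [hf2def, indicator_of_notMem hq, abs_zero]
          exact mul_nonneg hMF0.le (mul_nonneg hMF0.le hMg0)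
      have hb3 : ∀ q, |f3 q| ≤ MF * (MF * Mg) := by
        intro q
        by_cases hq : q ∈ A3
        · rw [hf3def, indicator_of_mem hq]
          exact hbnd q.1 (φ (-q.1) q.2) q.2
        · rw [hf3def, indicator_of_notMem hq, abs_zero]
          exact mul_nonneg hMF0.le (mul_nonneg hMF0.le hMg0)
      -- supports
      have hs1 : ∀ q, f1 q ≠ 0 → q.1 ∈ Icc 0 t := by
        intro q hq
        have hmem : q ∈ A1 := by
          by_contra h
          exact hq (indicator_of_notMem h _)
        exact ⟨hmem.1.1.le, hmem.1.2⟩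
      have hs2 : ∀ q, f2 q ≠ 0 → q.1 ∈ Icc 0 B := by
        intro q hq
        have hmem : q ∈ A2 := by
          by_contra h
          exact hq (indicator_of_notMem h _)
        obtain ⟨h1, h2⟩ := hmem
        have h3 := hκlb q.2 q.1 h1.le
        exact ⟨h1.le, (le_div_iff₀ hεpos).2 (by linarith)⟩
      have hs3 : ∀ q, f3 q ≠ 0 → q.1 ∈ Icc 0 B := by
        intro q hq
        have hmem : q ∈ A3 := by
          by_contra h
          exact hq (indicator_of_notMem h _)
        obtain ⟨h1, h2⟩ := hmem
        have h3 := hκlb (φ (-q.1) q.2) q.1 h1.le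
        rw [hκneg] at h3
        exact ⟨h1.le, (le_div_iff₀ hεpos).2 (by linarith)⟩
      have hif1 : Integrable f1 (MeasureSpace.volume.prod μ) :=
        hprodint f1 (MF * Mg) t hf1m hb1 hs1
      have hif2 : Integrable f2 (MeasureSpace.volume.prod μ) :=
        hprodint f2 (MF * (MF * Mg)) B hf2m hb2 hs2
      have hif3 : Integrable f3 (MeasureSpace.volume.prod μ) :=
        hprodint f3 (MF * (MF * Mg)) B hf3m hb3 hs3
      -- Step E1 : ∫ u in 0..t, T u = ∫ x, ∫ u, f1 (u,x) du dμ
      have hE1b : ∀ u : ℝ, (Ioc 0 t).indicator T u = ∫ x, f1 (u, x) ∂μ := by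
        intro u
        by_cases hu : u ∈ Ioc 0 t
        · rw [indicator_of_mem hu]
          have hptw : ∀ x : X, f1 (u, x) = F x * g (φF u x) := fun x =>
            indicator_of_mem (show (u, x) ∈ A1 from ⟨hu, mem_univ x⟩) _
          simp only [hptw, hTdef]
        · rw [indicator_of_notMem hu]
          have h0 : ∀ x : X, f1 (u, x) = 0 := fun x =>
            indicator_of_notMem (fun hmem => hu hmem.1) _
          simp only [h0, integral_zero]
      have hE1 : ∫ u in (0:ℝ)..t, T u = ∫ x, (∫ u, f1 (u, x)) ∂μ := by
        rw [intervalIntegral.integral_of_le ht, ← integral_indicator measurableSet_Ioc]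
        calc ∫ u, (Ioc 0 t).indicator T u
            = ∫ u, ∫ x, f1 (u, x) ∂μ := by simp only [hE1b]
          _ = ∫ x, (∫ u, f1 (u, x)) ∂μ := integral_integral_swap hif1
      -- Step E2 : pointwise identification with f2
      have hsub : ∀ x : X, ∫ u in (0:ℝ)..t, g (φF u x)
          = ∫ s in (0:ℝ)..(α x t), F (φ s x) * g (φ s x) := by
        intro x
        have hgx : Continuous fun u : ℝ => g (φ (α x u) x) :=
          hg.comp (hφc.comp ((hαcont x).prodMk continuous_const))
        have hder : ∀ s ∈ uIcc (0:ℝ) (α x t), HasDerivAt (κ x) (F (φ s x)) s := by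
          intro s _
          have h1 : HasDerivAt (fun r => ∫ u in (0:ℝ)..r, F (φ u x)) (F (φ s x)) s :=
            intervalIntegral.integral_hasDerivAt_right (hFφint x 0 s)
              ((hFφ x).stronglyMeasurable.stronglyMeasurableAtFilter) (hFφ x).continuousAt
          have h2 : κ x = fun r => ∫ u in (0:ℝ)..r, F (φ u x) := funext (hκ x)
          rw [h2]
          exact h1
        have h3 := intervalIntegral.integral_comp_smul_deriv hder
          ((hFφ x).continuousOn) hgx
        rw [hκ0, hα₂] at h3
        simp only [hφF]
        rw [← h3]
        apply intervalIntegral.integral_congr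
        intro s _
        simp only [Function.comp_apply, hα₁, smul_eq_mul]
      have hE2 : ∀ x : X, (∫ u, f1 (u, x)) = ∫ s, f2 (s, x) := by
        intro x
        have hαt : 0 ≤ α x t := by
          rw [← hα0 x]
          exact (hαmono x).monotone ht
        have hptw1 : ∀ u : ℝ, f1 (u, x)
            = F x * (Ioc 0 t).indicator (fun u => g (φF u x)) u := by
          intro u
          by_cases hu : u ∈ Ioc 0 t
          · rw [hf1def, indicator_of_mem (show (u, x) ∈ A1 from ⟨hu, mem_univ x⟩),
              indicator_of_mem hu]
          · rw [hf1def, indicator_of_notMem (show (u, x) ∉ A1 from fun h => hu h.1),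
              indicator_of_notMem hu, mul_zero]
        have hptw2 : ∀ s : ℝ, f2 (s, x)
            = F x * (Ioc 0 (α x t)).indicator (fun s => F (φ s x) * g (φ s x)) s := by
          intro s
          have hmemiff : (s, x) ∈ A2 ↔ s ∈ Ioc 0 (α x t) := by
            simp only [hA2def, mem_setOf_eq, mem_Ioc]
            exact and_congr_right fun _ => (hleα x s t).symm
          by_cases hs : s ∈ Ioc 0 (α x t)
          · rw [hf2def, indicator_of_mem (hmemiff.2 hs), indicator_of_mem hs]
          · rw [hf2def, indicator_of_notMem (fun h => hs (hmemiff.1 h)),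
              indicator_of_notMem hs, mul_zero]
        calc (∫ u, f1 (u, x))
            = ∫ u, F x * (Ioc 0 t).indicator (fun u => g (φF u x)) u := by
              simp only [hptw1]
          _ = F x * ∫ u, (Ioc 0 t).indicator (fun u => g (φF u x)) u :=
              integral_const_mul _ _
          _ = F x * ∫ u in (0:ℝ)..t, g (φF u x) := by
              rw [integral_indicator measurableSet_Ioc, ← intervalIntegral.integral_of_le ht]
          _ = F x * ∫ s in (0:ℝ)..(α x t), F (φ s x) * g (φ s x) := by rw [hsub x]
          _ = F x * ∫ s, (Ioc 0 (α x t)).indicator (fun s => F (φ s x) * g (φ s x)) s := by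
              rw [integral_indicator measurableSet_Ioc,
                ← intervalIntegral.integral_of_le hαt]
          _ = ∫ s, F x * (Ioc 0 (α x t)).indicator (fun s => F (φ s x) * g (φ s x)) s :=
              (integral_const_mul _ _).symm
          _ = ∫ s, f2 (s, x) := by simp only [← hptw2]
      -- Step E3/E5 : Fubini
      have hE3 : ∫ x, (∫ s, f2 (s, x)) ∂μ = ∫ s, ∫ x, f2 (s, x) ∂μ :=
        (integral_integral_swap (f := fun s x => f2 (s, x)) (by exact hif2)).symm
      have hE5 : ∫ s, ∫ x, f3 (s, x) ∂μ = ∫ x, (∫ s, f3 (s, x)) ∂μ :=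
        integral_integral_swap hif3
      -- Step E4 : invariance of μ
      have hE4 : ∀ s : ℝ, ∫ x, f2 (s, x) ∂μ = ∫ x, f3 (s, x) ∂μ := by
        intro s
        have hW : AEStronglyMeasurable (fun x => f2 (s, x)) (Measure.map (φ (-s)) μ) := by
          rw [hinv (-s)]
          exact (((hF.comp continuous_snd).mul
            ((hF.comp hφc).mul (hg.comp hφc))).measurable.indicator
              hA2m).comp (measurable_const.prodMk measurable_id)
            |>.stronglyMeasurable.aestronglyMeasurable
        have h1 : ∫ x, f2 (s, x) ∂μ = ∫ x, f2 (s, φ (-s) x) ∂μ := by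
          conv_lhs => rw [← hinv (-s)]
          exact integral_map (hφcont (-s)).measurable.aemeasurable hW
        rw [h1]
        refine integral_congr_ae (ae_of_all _ fun x => ?_)
        show f2 (s, φ (-s) x) = f3 (s, x)
        have hback : φ s (φ (-s) x) = x := by
          rw [← hφadd, add_neg_cancel, hφ0]
        have hmemiff : (s, φ (-s) x) ∈ A2 ↔ (s, x) ∈ A3 := by
          simp only [hA2def, hA3def, mem_setOf_eq, hκneg]
        by_cases hmem : (s, x) ∈ A3
        · have e2 : f2 (s, φ (-s) x)
              = F (φ (-s) x) * (F (φ s (φ (-s) x)) * g (φ s (φ (-s) x))) :=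
            indicator_of_mem (hmemiff.2 hmem) _
          have e3 : f3 (s, x) = F (φ (-s) x) * (F x * g x) :=
            indicator_of_mem hmem _
          rw [e2, e3, hback]
        · have e2 : f2 (s, φ (-s) x) = 0 :=
            indicator_of_notMem (fun h => hmem (hmemiff.1 h)) _
          have e3 : f3 (s, x) = 0 := indicator_of_notMem hmem _
          rw [e2, e3]
      -- Step E6 : inner integral of f3
      have hE6 : ∀ y : X, (∫ s, f3 (s, y)) = t * (F y * g y) := by
        intro y
        set b : ℝ := -α y (-t) with hbdef
        have hb0 : 0 ≤ b := by
          rw [hbdef, neg_nonneg, ← hα0 y]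
          exact (hαmono y).monotone (neg_nonpos.2 ht)
        have hmemiff : ∀ s : ℝ, (s, y) ∈ A3 ↔ s ∈ Ioc 0 b := by
          intro s
          simp only [hA3def, mem_setOf_eq, mem_Ioc]
          refine and_congr_right fun _ => ?_
          rw [neg_le, hbdef, le_neg]
          exact (hαle y (-s) (-t)).symm
        have hptw3 : ∀ s : ℝ, f3 (s, y)
            = (Ioc 0 b).indicator (fun s => F (φ (-s) y)) s * (F y * g y) := by
          intro s
          by_cases hs : s ∈ Ioc 0 b
          · rw [hf3def, indicator_of_mem ((hmemiff s).2 hs), indicator_of_mem hs]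
          · rw [hf3def, indicator_of_notMem (fun h => hs ((hmemiff s).1 h)),
              indicator_of_notMem hs, zero_mul]
        have hval : ∫ s in (0:ℝ)..b, F (φ (-s) y) = t := by
          have h1 : ∫ s in (0:ℝ)..b, F (φ (-s) y) = ∫ u in (-b)..(-0:ℝ), F (φ u y) :=
            intervalIntegral.integral_comp_neg (fun u => F (φ u y))
          rw [neg_zero] at h1
          have h2 := hκdiff y (α y (-t)) 0
          rw [hκ0, hα₂] at h2
          rw [h1, hbdef, neg_neg]
          linarith
        calc (∫ s, f3 (s, y))
            = ∫ s, (Ioc 0 b).indicator (fun s => F (φ (-s) y)) s * (F y * g y) := by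
              simp only [hptw3]
          _ = (∫ s, (Ioc 0 b).indicator (fun s => F (φ (-s) y)) s) * (F y * g y) :=
              integral_mul_const _ _
          _ = (∫ s in (0:ℝ)..b, F (φ (-s) y)) * (F y * g y) := by
              rw [integral_indicator measurableSet_Ioc,
                ← intervalIntegral.integral_of_le hb0]
          _ = t * (F y * g y) := by rw [hval]
      -- assemble
      calc ∫ u in (0:ℝ)..t, T u
          = ∫ x, (∫ u, f1 (u, x)) ∂μ := hE1
        _ = ∫ x, (∫ s, f2 (s, x)) ∂μ := by simp only [hE2]
        _ = ∫ s, ∫ x, f2 (s, x) ∂μ := hE3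
        _ = ∫ s, ∫ x, f3 (s, x) ∂μ := by simp only [hE4]
        _ = ∫ x, (∫ s, f3 (s, x)) ∂μ := hE5
        _ = ∫ x, t * (F x * g x) ∂μ := by simp only [hE6]
        _ = t * C := integral_const_mul _ _
    intro t ht
    rcases eq_or_lt_of_le ht with h0 | h0
    · rw [← h0]
      show T 0 = C
      simp only [hTdef, hCdef]
      congr 1
      funext x
      rw [hφF0]
    · show T t = C
      have h1 : HasDerivAt (fun r => ∫ u in (0:ℝ)..r, T u) (T t) t :=
        intervalIntegral.integral_hasDerivAt_right (hTcont.intervalIntegrable _ _)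
          (hTcont.stronglyMeasurable.stronglyMeasurableAtFilter)
          hTcont.continuousAt
      have h2 : (fun r => ∫ u in (0:ℝ)..r, T u) =ᶠ[nhds t] fun r => r * C := by
        filter_upwards [Ioi_mem_nhds h0] with r hr
        exact havg r (le_of_lt hr)
      have h3 : HasDerivAt (fun r => r * C) (T t) t := h1.congr_of_eventuallyEq h2.symm
      exact h3.unique (hasDerivAt_mul_const C)
  -- the weighted measure ν
  set ν : Measure X := μ.withDensity (fun x => ENNReal.ofReal (F x)) with hνdef
  have hFm' : Measurable fun x => ENNReal.ofReal (F x) :=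
    ENNReal.measurable_ofReal.comp hF.measurable
  have hνfin : IsFiniteMeasure ν := by
    constructor
    rw [hνdef, withDensity_apply _ MeasurableSet.univ, Measure.restrict_univ]
    calc ∫⁻ x, ENNReal.ofReal (F x) ∂μ
        ≤ ∫⁻ _, ENNReal.ofReal MF ∂μ :=
          lintegral_mono fun x => ENNReal.ofReal_le_ofReal (hMFle x)
      _ = ENNReal.ofReal MF := by rw [lintegral_const, measure_univ, mul_one]
      _ < ⊤ := ENNReal.ofReal_lt_top
  have hνuniv : ν univ = ENNReal.ofReal (∫ x, F x ∂μ) := by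
    rw [hνdef, withDensity_apply _ MeasurableSet.univ, Measure.restrict_univ,
      ← ofReal_integral_eq_lintegral_ofReal hFint (ae_of_all _ fun x => (hFpos x).le)]
  -- invariance of ν for nonnegative times
  have hmapν : ∀ t : ℝ, 0 ≤ t → Measure.map (φF t) ν = ν := by
    intro t ht
    have lem : ∀ h : X → ℝ, Continuous h → (∀ x, 0 ≤ h x) →
        ∫⁻ x, ENNReal.ofReal (F x) * ENNReal.ofReal (h (φF t x)) ∂μ
        = ∫⁻ x, ENNReal.ofReal (F x) * ENNReal.ofReal (h x) ∂μ := by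
      intro h hc hpos
      obtain ⟨xm, -, hxm⟩ := isCompact_univ.exists_isMaxOn univ_nonempty hc.abs.continuousOn
      have hbm : ∀ x, |h x| ≤ |h xm| := fun x => hxm (mem_univ x)
      have hint1 : Integrable (fun x => F x * h (φF t x)) μ :=
        hμint _ (MF * |h xm|)
          ((hF.measurable.mul (hc.measurable.comp (hφFmeas t)))).aestronglyMeasurable
          (fun x => by
            rw [abs_mul, abs_of_pos (hFpos x)]
            exact mul_le_mul (hMFle x) (hbm _) (abs_nonneg _) hMF0.le)
      have hint2 : Integrable (fun x => F x * h x) μ :=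
        hμint _ (MF * |h xm|) ((hF.measurable.mul hc.measurable)).aestronglyMeasurable
          (fun x => by
            rw [abs_mul, abs_of_pos (hFpos x)]
            exact mul_le_mul (hMFle x) (hbm _) (abs_nonneg _) hMF0.le)
      have e1 : ∀ x : X, ENNReal.ofReal (F x) * ENNReal.ofReal (h (φF t x))
          = ENNReal.ofReal (F x * h (φF t x)) := fun x =>
        (ENNReal.ofReal_mul (hFpos x).le).symm
      have e2 : ∀ x : X, ENNReal.ofReal (F x) * ENNReal.ofReal (h x)
          = ENNReal.ofReal (F x * h x) := fun x => (ENNReal.ofReal_mul (hFpos x).le).symm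
      rw [lintegral_congr e1, lintegral_congr e2,
        ← ofReal_integral_eq_lintegral_ofReal hint1
          (ae_of_all _ fun x => mul_nonneg (hFpos x).le (hpos _)),
        ← ofReal_integral_eq_lintegral_ofReal hint2
          (ae_of_all _ fun x => mul_nonneg (hFpos x).le (hpos _)),
        key h hc t ht]
    symm
    refine ext_of_forall_lintegral_eq_of_IsFiniteMeasure (fun f => ?_)
    have hfm : Measurable fun x => ((f x : ℝ≥0) : ℝ≥0∞) :=
      f.continuous.measurable.coe_nnreal_ennreal
    have hfm2 : Measurable fun x => ((f (φF t x) : ℝ≥0) : ℝ≥0∞) := hfm.comp (hφFmeas t)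
    rw [lintegral_map hfm (hφFmeas t), hνdef,
      lintegral_withDensity_eq_lintegral_mul μ hFm' hfm,
      lintegral_withDensity_eq_lintegral_mul μ hFm' hfm2]
    simp only [Pi.mul_apply, Function.comp_apply]
    have hcoe : ∀ r : ℝ≥0, ((r : ℝ≥0∞)) = ENNReal.ofReal ((r : ℝ)) := fun r =>
      (ENNReal.ofReal_coe_nnreal (p := r)).symm
    simp only [hcoe]
    exact (lem (fun x => ((f x : ℝ≥0) : ℝ)) (NNReal.continuous_coe.comp f.continuous)
      (fun x => (f x).coe_nonneg)).symm
  -- invariance for all times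
  have hmapν' : ∀ t : ℝ, Measure.map (φF t) ν = ν := by
    intro t
    rcases le_or_gt 0 t with ht | ht
    · exact hmapν t ht
    · have h1 := hmapν (-t) (by linarith)
      have h2 : Measure.map (φF t) (Measure.map (φF (-t)) ν) = ν := by
        rw [Measure.map_map (hφFmeas t) (hφFmeas (-t))]
        have hid : (φF t) ∘ (φF (-t)) = id := by
          funext x
          simp only [Function.comp_apply, id_eq]
          rw [hφFadd, add_neg_cancel, hφF0]
        rw [hid, Measure.map_id]
      rw [h1] at h2
      exact h2
  constructor
  · constructor
    rw [hμF, Measure.smul_apply, smul_eq_mul, hνuniv]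
    rw [ENNReal.inv_mul_cancel (ENNReal.ofReal_pos.2 hCpos).ne' ENNReal.ofReal_ne_top]
  · intro t
    rw [hμF, Measure.map_smul, hmapν' t]
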